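/- Let (Z_n,·) with x·y = (ax + (1−a)y) mod n be a pentagonal quasigroup (so a⁴ − a³ + a² − a + 1 ≡ 0 (mod n), gcd(a,n) = gcd(a−1,n) = 1). Then a + k(1−a) ≡ 0 (mod n) for k = (1 − a³ − a) mod n, i.e., the quasigroup is k-translatable for this k, and gcd(k,n) = 1. -/
import Mathlib


/-- A pentagonal quasigroup: a quasigroup (unique left/right division)
satisfying idempotency, mediality and the pentagonal identity. -/
def IsPentagonal {Q : Type*} (m : Q → Q → Q) : Prop :=
  (∀ a b : Q, ∃! x, m a x = b) ∧
  (∀ a b : Q, ∃! x, m x a = b) ∧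
  (∀ x, m x x = x) ∧
  (∀ x y z u, m (m x y) (m z u) = m (m x z) (m y u)) ∧
  (∀ x y, m (m (m (m x y) x) y) x = y)

/-- A groupoid on `ZMod n` is `k`-translatable if each row of the Cayley table is
the cyclic shift by `k` of the previous row, i.e. `i·j = (i+1)·(j+k)`. -/
def kTranslatable (n k : ℕ) (m : ZMod n → ZMod n → ZMod n) : Prop :=
  ∀ i j : ZMod n, m i j = m (i + 1) (j + (k : ZMod n))

theorem pentagonal_translatable (n a : ℕ) (hn : 1 < n)
    (ha1 : 1 < a) (ha2 : a < n)
    (hc1 : Nat.Coprime a n) (hc2 : Nat.Coprime (a - 1) n)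
    (hpoly : (a : ZMod n) ^ 4 - (a : ZMod n) ^ 3 + (a : ZMod n) ^ 2 - (a : ZMod n) + 1 = 0) :
    (a : ZMod n) + ((1 - (a : ZMod n) ^ 3 - (a : ZMod n)).val : ZMod n) * (1 - (a : ZMod n)) = 0 ∧
    kTranslatable n (1 - (a : ZMod n) ^ 3 - (a : ZMod n)).val
      (fun x y : ZMod n => (a : ZMod n) * x + (1 - (a : ZMod n)) * y) ∧
    Nat.Coprime (1 - (a : ZMod n) ^ 3 - (a : ZMod n)).val n := by
  haveI : NeZero n := ⟨by omega⟩
  set A : ZMod n := (a : ZMod n) with hA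
  have hval : (((1 - A ^ 3 - A).val : ℕ) : ZMod n) = 1 - A ^ 3 - A :=
    ZMod.natCast_rightInverse _
  have h1 : A + ((1 - A ^ 3 - A).val : ZMod n) * (1 - A) = 0 := by
    rw [hval]
    calc A + (1 - A ^ 3 - A) * (1 - A)
        = A ^ 4 - A ^ 3 + A ^ 2 - A + 1 := by ring
      _ = 0 := hpoly
  refine ⟨h1, ?_, ?_⟩
  · intro i j
    simp only [hval]
    have : A * (i + 1) + (1 - A) * (j + (1 - A ^ 3 - A)) - (A * i + (1 - A) * j)
        = A + (1 - A ^ 3 - A) * (1 - A) := by ring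
    have h2 := h1
    rw [hval] at h2
    linear_combination -this - h2
  · have hAunit : IsUnit A := (ZMod.isUnit_iff_coprime a n).mpr hc1
    have hA1unit : IsUnit (1 - A) := by
      have : ((a - 1 : ℕ) : ZMod n) = A - 1 := by
        push_cast [Nat.cast_sub ha1.le]; ring
      have h := (ZMod.isUnit_iff_coprime (a - 1) n).mpr hc2
      rw [this] at h
      simpa using h.neg
    have hk : IsUnit (1 - A ^ 3 - A) := by
      have hmul : (1 - A ^ 3 - A) * (1 - A) = -A := by linear_combination hpoly
      have : IsUnit ((1 - A ^ 3 - A) * (1 - A)) := hmul ▸ hAunit.neg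
      exact isUnit_of_mul_isUnit_left this
    have := (ZMod.isUnit_iff_coprime (1 - A ^ 3 - A).val n).mp (by rwa [hval])
    exact this
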